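/- Let Ψ be a standard additive character of ℚ_p and let v be a positive integer. Then for every z ∈ ℚ_p with |z|_p ≥ p, one has ∫_{ℤ_p} Ψ(z·(1 + y))·|y|_p^{v−1} dμ(y) = Ψ(z) · ((1 − p^{v−1})/(1 − p^{−v})) · |z|_p^{−v}. -/

import Mathlib

open MeasureTheory Complex ENNReal

set_option linter.unusedSectionVars false
set_option linter.unusedVariables false
set_option maxHeartbeats 1000000

section Aux

variable {p : ℕ} [Fact p.Prime] [MeasurableSpace ℚ_[p]] [BorelSpace ℚ_[p]]

private lemma pB_eq (r : ℝ) : {y : ℚ_[p] | ‖y‖ ≤ r} = Metric.closedBall 0 r := by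
  ext y; simp [Metric.mem_closedBall, dist_zero_right]

private lemma pB_meas (r : ℝ) : MeasurableSet {y : ℚ_[p] | ‖y‖ ≤ r} := by
  rw [pB_eq]; exact Metric.isClosed_closedBall.measurableSet

private lemma pB_compact (r : ℝ) : IsCompact {y : ℚ_[p] | ‖y‖ ≤ r} := by
  rw [pB_eq]; exact isCompact_closedBall 0 r

private lemma hpQ : ((p : ℚ_[p])) ≠ 0 :=
  Nat.cast_ne_zero.2 (Fact.out : p.Prime).pos.ne'

private lemma hp1R : (1 : ℝ) < p := by exact_mod_cast (Fact.out : p.Prime).one_lt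

private lemma preim_pB1 :
    (fun y : ℚ_[p] => (p : ℚ_[p]) * y) ⁻¹' {y : ℚ_[p] | ‖y‖ ≤ (p : ℝ)⁻¹}
      = {y : ℚ_[p] | ‖y‖ ≤ 1} := by
  have hppos : (0:ℝ) < (p:ℝ)⁻¹ := by
    have := hp1R (p := p); positivity
  ext y
  simp only [Set.mem_preimage, Set.mem_setOf_eq, norm_mul, Padic.norm_p]
  rw [mul_comm, mul_le_iff_le_one_left hppos]

private lemma exists_res {y : ℚ_[p]} (hy : ‖y‖ ≤ 1) :
    ∃ i : ℕ, i < p ∧ ‖y - (i : ℚ_[p])‖ ≤ (p : ℝ)⁻¹ := by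
  set x : ℤ_[p] := ⟨y, hy⟩ with hx
  refine ⟨x.appr 1, by simpa using x.appr_lt 1, ?_⟩
  have h1 : x - (x.appr 1 : ℤ_[p]) ∈ Ideal.span {(p : ℤ_[p]) ^ 1} := PadicInt.appr_spec 1 x
  have h2 : ‖x - (x.appr 1 : ℤ_[p])‖ ≤ (p : ℝ) ^ (-(1:ℕ) : ℤ) :=
    (PadicInt.norm_le_pow_iff_mem_span_pow _ 1).2 h1
  have h3 : ((x - (x.appr 1 : ℤ_[p]) : ℤ_[p]) : ℚ_[p]) = y - (x.appr 1 : ℚ_[p]) := by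
    rw [PadicInt.coe_sub, PadicInt.coe_natCast]
  rw [PadicInt.norm_def, h3] at h2
  simpa using h2

private lemma res_unique {i j : ℕ} (hi : i < p) (hj : j < p)
    (h : ‖(i : ℚ_[p]) - (j : ℚ_[p])‖ ≤ (p : ℝ)⁻¹) : i = j := by
  have : ‖((i - j : ℤ) : ℚ_[p])‖ ≤ (p : ℝ) ^ (-(1:ℕ) : ℤ) := by push_cast; simpa using h
  have hdvd : ((p : ℤ) ^ 1) ∣ (i - j : ℤ) := (Padic.norm_int_le_pow_iff_dvd _ _).1 this
  have hp1 : (p : ℤ) ∣ (i - j : ℤ) := by simpa using hdvd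
  have h0 : (i - j : ℤ) = 0 :=
    Int.eq_zero_of_dvd_of_natAbs_lt_natAbs hp1 (by simp; omega)
  omega

private lemma pB_partition :
    {y : ℚ_[p] | ‖y‖ ≤ 1} =
      ⋃ i ∈ Finset.range p, (fun y => (-(i : ℚ_[p])) + y) ⁻¹' {y : ℚ_[p] | ‖y‖ ≤ (p : ℝ)⁻¹} := by
  ext y
  simp only [Set.mem_setOf_eq, Set.mem_iUnion, Set.mem_preimage, Finset.mem_range,
    neg_add_eq_sub, exists_prop]
  constructor
  · intro hy
    obtain ⟨i, hi, hie⟩ := exists_res hy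
    exact ⟨i, hi, by simpa [sub_eq_neg_add] using hie⟩
  · rintro ⟨i, hi, hie⟩
    have h1 : ‖y - (i:ℚ_[p])‖ ≤ (p:ℝ)⁻¹ := by
      simpa [sub_eq_neg_add] using hie
    have h2 : ‖(i : ℚ_[p])‖ ≤ 1 := Padic.norm_int_le_one i
    have hple : (p:ℝ)⁻¹ ≤ 1 := by
      rw [inv_le_one_iff₀]; right; exact (hp1R (p := p)).le
    calc ‖y‖ = ‖(y - (i:ℚ_[p])) + (i:ℚ_[p])‖ := by ring_nf
    _ ≤ max ‖y - (i:ℚ_[p])‖ ‖(i : ℚ_[p])‖ := Padic.nonarchimedean _ _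
    _ ≤ 1 := max_le (h1.trans hple) h2

variable (μ : Measure ℚ_[p]) [μ.IsAddHaarMeasure]

private lemma measure_pB1 (hμ : μ {x : ℚ_[p] | ‖x‖ ≤ 1} = 1) :
    μ {y : ℚ_[p] | ‖y‖ ≤ (p : ℝ)⁻¹} = (p : ℝ≥0∞)⁻¹ := by
  have key : μ {x : ℚ_[p] | ‖x‖ ≤ 1} = p * μ {y : ℚ_[p] | ‖y‖ ≤ (p : ℝ)⁻¹} := by
    rw [pB_partition]
    rw [measure_biUnion_finset ?_ (fun i _ => (pB_meas _).preimage (measurable_const_add _))]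
    · simp only [measure_preimage_add]
      simp [Finset.sum_const]
    · intro i hi j hj hij
      simp only [Finset.mem_coe, Finset.mem_range] at hi hj
      apply Set.disjoint_left.2
      rintro y h1 h2
      simp only [Set.mem_preimage, Set.mem_setOf_eq, neg_add_eq_sub] at h1 h2
      exact hij (res_unique hi hj (by
        calc ‖(i:ℚ_[p]) - j‖ = ‖(y - (j:ℚ_[p])) - (y - (i:ℚ_[p]))‖ := by ring_nf
        _ ≤ max ‖y - (j:ℚ_[p])‖ ‖-(y - (i:ℚ_[p]))‖ := by
            simpa [sub_eq_add_neg] using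
              Padic.nonarchimedean (y - (j:ℚ_[p])) (-(y - (i:ℚ_[p])))
        _ ≤ (p:ℝ)⁻¹ := by rw [norm_neg]; exact max_le h2 h1))
  rw [hμ] at key
  have := ENNReal.eq_inv_of_mul_eq_one_left key.symm
  rw [this, inv_inv]

private lemma map_mul_p (hμ : μ {x : ℚ_[p] | ‖x‖ ≤ 1} = 1) :
    Measure.map (fun y : ℚ_[p] => (p : ℚ_[p]) * y) μ = (p : ℝ≥0∞) • μ := by
  have hμ1 : μ {y : ℚ_[p] | ‖y‖ ≤ (p : ℝ)⁻¹} = (p : ℝ≥0∞)⁻¹ := measure_pB1 μ hμ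
  set T : ℚ_[p] ≃+ ℚ_[p] :=
    AddEquiv.mk' (Equiv.mulLeft₀ (p : ℚ_[p]) hpQ) (fun x y => by simp [mul_add]) with hT
  have hTfun : (T : ℚ_[p] → ℚ_[p]) = fun y => (p : ℚ_[p]) * y := rfl
  have hTc : Continuous T := by rw [hTfun]; exact continuous_mul_left _
  have hTc' : Continuous T.symm := by
    have : (T.symm : ℚ_[p] → ℚ_[p]) = fun y => (p : ℚ_[p])⁻¹ * y := rfl
    rw [this]; exact continuous_mul_left _
  haveI : (Measure.map (T : ℚ_[p] → ℚ_[p]) μ).IsAddHaarMeasure :=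
    AddEquiv.isAddHaarMeasure_map μ T hTc hTc'
  have hmapeq : Measure.map (fun y : ℚ_[p] => (p : ℚ_[p]) * y) μ
      = Measure.map (T : ℚ_[p] → ℚ_[p]) μ := rfl
  rw [hmapeq]
  have huniq := Measure.isAddLeftInvariant_eq_smul (Measure.map (T : ℚ_[p] → ℚ_[p]) μ) μ
  set c := (Measure.map (T : ℚ_[p] → ℚ_[p]) μ).addHaarScalarFactor μ
  have hval : Measure.map (T : ℚ_[p] → ℚ_[p]) μ {y : ℚ_[p] | ‖y‖ ≤ (p : ℝ)⁻¹} = 1 := by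
    rw [Measure.map_apply (hTc.measurable) (pB_meas _)]
    have : (T : ℚ_[p] → ℚ_[p]) ⁻¹' {y : ℚ_[p] | ‖y‖ ≤ (p : ℝ)⁻¹} = {y : ℚ_[p] | ‖y‖ ≤ 1} := by
      rw [hTfun]; exact preim_pB1
    rw [this, hμ]
  have hval2 : Measure.map (T : ℚ_[p] → ℚ_[p]) μ {y : ℚ_[p] | ‖y‖ ≤ (p : ℝ)⁻¹}
      = (c : ℝ≥0∞) * (p : ℝ≥0∞)⁻¹ := by
    rw [huniq, Measure.smul_apply, hμ1, ENNReal.smul_def, smul_eq_mul]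
  have hc : (c : ℝ≥0∞) = (p : ℝ≥0∞) := by
    have h1 : (c : ℝ≥0∞) * (p : ℝ≥0∞)⁻¹ = 1 := by rw [← hval2, hval]
    have := ENNReal.eq_inv_of_mul_eq_one_left h1
    rw [this, inv_inv]
  rw [huniq, ENNReal.smul_def, hc]

private lemma integrableOn_pB (f : ℚ_[p] → ℂ) (hf : Continuous f) (r : ℝ) :
    IntegrableOn f {y : ℚ_[p] | ‖y‖ ≤ r} μ :=
  hf.continuousOn.integrableOn_compact (pB_compact r)

/-- Scaling substitution. -/
private lemma scale_setIntegral (hμ : μ {x : ℚ_[p] | ‖x‖ ≤ 1} = 1) (f : ℚ_[p] → ℂ)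
    (hf : Continuous f) :
    ∫ y in {y : ℚ_[p] | ‖y‖ ≤ (p : ℝ)⁻¹}, f y ∂μ
      = (p : ℝ)⁻¹ • ∫ y in {y : ℚ_[p] | ‖y‖ ≤ 1}, f ((p : ℚ_[p]) * y) ∂μ := by
  have hmap := map_mul_p μ hμ
  have hmeasg : Measurable (fun y : ℚ_[p] => (p : ℚ_[p]) * y) :=
    (continuous_mul_left _).measurable
  have h1 : ∫ y in {y : ℚ_[p] | ‖y‖ ≤ (p : ℝ)⁻¹}, f y
        ∂(Measure.map (fun y : ℚ_[p] => (p : ℚ_[p]) * y) μ)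
      = ∫ y in {y : ℚ_[p] | ‖y‖ ≤ 1}, f ((p : ℚ_[p]) * y) ∂μ := by
    rw [setIntegral_map (pB_meas _) hf.aestronglyMeasurable hmeasg.aemeasurable, preim_pB1]
  have h2 : ∫ y in {y : ℚ_[p] | ‖y‖ ≤ (p : ℝ)⁻¹}, f y
        ∂(Measure.map (fun y : ℚ_[p] => (p : ℚ_[p]) * y) μ)
      = (p : ℝ) • ∫ y in {y : ℚ_[p] | ‖y‖ ≤ (p : ℝ)⁻¹}, f y ∂μ := by
    rw [hmap, Measure.restrict_smul, integral_smul_measure]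
    simp
  have hppos : (0:ℝ) < p := by linarith [hp1R (p := p)]
  rw [← h1, h2, smul_smul, inv_mul_cancel₀ hppos.ne', one_smul]

/-- The oscillatory integral over ℤ_p vanishes for `‖w‖ ≥ p`. -/
private lemma vanish (Ψ : ℚ_[p] → ℂ)
    (hΨadd : ∀ a b : ℚ_[p], Ψ (a + b) = Ψ a * Ψ b)
    (hΨnontriv : ∃ x : ℚ_[p], ‖x‖ ≤ p ∧ Ψ x ≠ 1)
    (w : ℚ_[p]) (hw : (p : ℝ) ≤ ‖w‖) :
    ∫ y in {y : ℚ_[p] | ‖y‖ ≤ 1}, Ψ (w * y) ∂μ = 0 := by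
  obtain ⟨x, hx, hΨx⟩ := hΨnontriv
  have hppos : (0:ℝ) < p := by linarith [hp1R (p := p)]
  have hw0 : w ≠ 0 := by
    intro h; rw [h, norm_zero] at hw; linarith
  set t : ℚ_[p] := x / w with ht
  have htnorm : ‖t‖ ≤ 1 := by
    rw [ht, norm_div, div_le_one (lt_of_lt_of_le hppos hw)]
    exact hx.trans hw
  have hwt : w * t = x := by rw [ht]; field_simp
  set g : ℚ_[p] → ℂ := Set.indicator {y : ℚ_[p] | ‖y‖ ≤ 1} (fun y => Ψ (w * y)) with hg
  have key : ∀ y : ℚ_[p], g (y + t) = Ψ x * g y := by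
    intro y
    by_cases hy : ‖y‖ ≤ 1
    · have hyt : ‖y + t‖ ≤ 1 :=
        le_trans (Padic.nonarchimedean y t) (max_le hy htnorm)
      rw [hg, Set.indicator_of_mem (show (y + t) ∈ {y : ℚ_[p] | ‖y‖ ≤ 1} from hyt),
        Set.indicator_of_mem (show y ∈ {y : ℚ_[p] | ‖y‖ ≤ 1} from hy),
        mul_add, hΨadd, hwt, mul_comm]
    · have hyt : ¬ ‖y + t‖ ≤ 1 := by
        intro hc
        apply hy
        have : y = (y + t) + (-t) := by ring
        rw [this]
        exact le_trans (Padic.nonarchimedean _ _)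
          (max_le hc (by rwa [norm_neg]))
      rw [hg, Set.indicator_of_notMem (show (y + t) ∉ {y : ℚ_[p] | ‖y‖ ≤ 1} from hyt),
        Set.indicator_of_notMem (show y ∉ {y : ℚ_[p] | ‖y‖ ≤ 1} from hy), mul_zero]
  have hinv : ∫ y, g (y + t) ∂μ = ∫ y, g y ∂μ := integral_add_right_eq_self g t
  have h2 : ∫ y, g (y + t) ∂μ = Ψ x * ∫ y, g y ∂μ := by
    simp_rw [key]
    exact MeasureTheory.integral_const_mul _ _
  have h3 : ∫ y, g y ∂μ = ∫ y in {y : ℚ_[p] | ‖y‖ ≤ 1}, Ψ (w * y) ∂μ := by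
    rw [hg, integral_indicator (pB_meas 1)]
  have : (Ψ x - 1) * ∫ y, g y ∂μ = 0 := by
    rw [sub_mul, one_mul, ← h2, hinv, sub_self]
  rcases mul_eq_zero.1 this with h | h
  · exact absurd (sub_eq_zero.1 h) hΨx
  · rw [← h3, h]

/-- On the unit sphere the norm is 1. -/
private lemma norm_one_of {y : ℚ_[p]} (h1 : ‖y‖ ≤ 1) (h2 : ¬ ‖y‖ ≤ (p : ℝ)⁻¹) : ‖y‖ = 1 := by
  have hy0 : y ≠ 0 := by
    intro h
    apply h2
    rw [h, norm_zero]
    have := hp1R (p := p); positivity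
  rw [Padic.norm_eq_zpow_neg_valuation hy0] at h1 h2 ⊢
  have hub : -y.valuation ≤ 0 := by
    have : ((p:ℝ) ^ (-y.valuation) ≤ (p:ℝ) ^ (0:ℤ)) := by simpa using h1
    exact (zpow_le_zpow_iff_right₀ hp1R).1 this
  have hlb : ¬ (-y.valuation ≤ -1) := by
    intro hc
    apply h2
    calc (p:ℝ) ^ (-y.valuation) ≤ (p:ℝ) ^ (-1 : ℤ) := (zpow_le_zpow_iff_right₀ hp1R).2 hc
    _ = (p:ℝ)⁻¹ := by simp
  have : -y.valuation = 0 := by omega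
  rw [this, zpow_zero]

/-- Splitting of the integral over the unit ball. -/
private lemma split_setIntegral (f : ℚ_[p] → ℂ) (hf : Continuous f) :
    ∫ y in {y : ℚ_[p] | ‖y‖ ≤ 1}, f y ∂μ
      = (∫ y in {y : ℚ_[p] | ‖y‖ ≤ (p : ℝ)⁻¹}, f y ∂μ)
        + ∫ y in {y : ℚ_[p] | ‖y‖ ≤ 1} \ {y : ℚ_[p] | ‖y‖ ≤ (p : ℝ)⁻¹}, f y ∂μ := by
  have hsub : {y : ℚ_[p] | ‖y‖ ≤ (p : ℝ)⁻¹} ⊆ {y : ℚ_[p] | ‖y‖ ≤ 1} := by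
    intro y hy
    have hple : (p:ℝ)⁻¹ ≤ 1 := by
      rw [inv_le_one_iff₀]; right; exact (hp1R (p := p)).le
    exact le_trans hy hple
  have := setIntegral_union (f := f) (μ := μ)
    (Set.disjoint_sdiff_right (s := {y : ℚ_[p] | ‖y‖ ≤ (p : ℝ)⁻¹})
      (t := {y : ℚ_[p] | ‖y‖ ≤ 1}))
    ((pB_meas 1).diff (pB_meas _))
    ((integrableOn_pB μ f hf _))
    ((integrableOn_pB μ f hf 1).mono_set Set.diff_subset)
  rw [← this, Set.union_diff_cancel hsub]

end Aux

section Main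

variable {p : ℕ} [Fact p.Prime] [MeasurableSpace ℚ_[p]] [BorelSpace ℚ_[p]]
variable (μ : Measure ℚ_[p]) [μ.IsAddHaarMeasure]

private lemma q_abs_lt_one (v : ℕ) (hv : 0 < v) :
    ‖(p : ℂ) ^ (-(v : ℤ))‖ < 1 := by
  rw [norm_zpow, Complex.norm_natCast]
  have : (p:ℝ) ^ (-(v:ℤ)) < (p:ℝ) ^ (0:ℤ) :=
    zpow_lt_zpow_right₀ hp1R (by omega)
  simpa using this

private lemma one_sub_q_ne (v : ℕ) (hv : 0 < v) :
    (1 : ℂ) - (p : ℂ) ^ (-(v : ℤ)) ≠ 0 := by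
  intro h
  have hq : (p : ℂ) ^ (-(v : ℤ)) = 1 := by linear_combination -h
  have := q_abs_lt_one (p := p) v hv
  rw [hq] at this
  simp at this

private lemma coef_eq (v : ℕ) (hv : 0 < v) (A : ℂ) :
    (p:ℝ)⁻¹ • ((((p:ℝ)⁻¹ ^ (v - 1) : ℝ) : ℂ) * A) = (p : ℂ) ^ (-(v : ℤ)) * A := by
  obtain ⟨k, rfl⟩ : ∃ k, v = k + 1 := ⟨v - 1, by omega⟩
  have hp0 : (p : ℂ) ≠ 0 := by
    exact_mod_cast Nat.cast_ne_zero.2 (Fact.out : p.Prime).pos.ne'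
  rw [Complex.real_smul]
  push_cast
  rw [zpow_neg, zpow_add_one₀ hp0, zpow_natCast]
  ring

/-- Value of `∫_{ℤ_p} ‖y‖^{v-1} dy`. -/
private lemma base_integral (hμ : μ {x : ℚ_[p] | ‖x‖ ≤ 1} = 1) (v : ℕ) (hv : 0 < v) :
    ∫ y in {y : ℚ_[p] | ‖y‖ ≤ 1}, ((‖y‖ ^ (v - 1) : ℝ) : ℂ) ∂μ
      = (1 - (p : ℂ)⁻¹) / (1 - (p : ℂ) ^ (-(v : ℤ))) := by
  set A := ∫ y in {y : ℚ_[p] | ‖y‖ ≤ 1}, ((‖y‖ ^ (v - 1) : ℝ) : ℂ) ∂μ with hA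
  have hcont : Continuous (fun y : ℚ_[p] => ((‖y‖ ^ (v - 1) : ℝ) : ℂ)) :=
    Complex.continuous_ofReal.comp (continuous_norm.pow _)
  have hsplit := split_setIntegral μ _ hcont
  -- outer part
  have houter : ∫ y in {y : ℚ_[p] | ‖y‖ ≤ 1} \ {y : ℚ_[p] | ‖y‖ ≤ (p : ℝ)⁻¹},
      ((‖y‖ ^ (v - 1) : ℝ) : ℂ) ∂μ = (1 : ℂ) - (p : ℂ)⁻¹ := by
    rw [setIntegral_congr_fun ((pB_meas 1).diff (pB_meas _))
      (g := fun _ => (1 : ℂ)) ?_]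
    · rw [setIntegral_const]
      have hsub : {y : ℚ_[p] | ‖y‖ ≤ (p : ℝ)⁻¹} ⊆ {y : ℚ_[p] | ‖y‖ ≤ 1} := by
        intro y hy
        have hple : (p:ℝ)⁻¹ ≤ 1 := by
          rw [inv_le_one_iff₀]; right; exact (hp1R (p := p)).le
        exact le_trans hy hple
      have hmd : μ ({y : ℚ_[p] | ‖y‖ ≤ 1} \ {y : ℚ_[p] | ‖y‖ ≤ (p : ℝ)⁻¹})
          = 1 - (p : ℝ≥0∞)⁻¹ := by
        rw [measure_diff hsub (pB_meas _).nullMeasurableSet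
          (by rw [measure_pB1 μ hμ]; exact ENNReal.inv_ne_top.2 (by
            exact_mod_cast (Fact.out : p.Prime).pos.ne')), hμ, measure_pB1 μ hμ]
      rw [measureReal_def, hmd]
      have hle : (p : ℝ≥0∞)⁻¹ ≤ 1 := by
        rw [ENNReal.inv_le_one]
        exact_mod_cast (Fact.out : p.Prime).one_le
      rw [ENNReal.toReal_sub_of_le hle ENNReal.one_ne_top]
      simp [Complex.real_smul]
    · intro y hy
      have h1 := norm_one_of (p := p) hy.1 hy.2
      simp [h1]
  -- inner part
  have hinner : ∫ y in {y : ℚ_[p] | ‖y‖ ≤ (p : ℝ)⁻¹}, ((‖y‖ ^ (v - 1) : ℝ) : ℂ) ∂μ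
      = (p : ℂ) ^ (-(v : ℤ)) * A := by
    rw [scale_setIntegral μ hμ _ hcont]
    have : ∀ y : ℚ_[p], ((‖(p : ℚ_[p]) * y‖ ^ (v - 1) : ℝ) : ℂ)
        = (((p:ℝ)⁻¹ ^ (v - 1) : ℝ) : ℂ) * ((‖y‖ ^ (v - 1) : ℝ) : ℂ) := by
      intro y
      rw [norm_mul, Padic.norm_p, mul_pow]
      push_cast
      ring
    simp_rw [this]
    rw [MeasureTheory.integral_const_mul]
    exact coef_eq v hv A
  have heq : A = (p : ℂ) ^ (-(v : ℤ)) * A + (1 - (p : ℂ)⁻¹) := by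
    rw [hA]
    nth_rewrite 1 [hsplit]
    rw [hinner, houter]
  rw [_root_.eq_div_iff (one_sub_q_ne v hv)]
  linear_combination heq

variable (Ψ : ℚ_[p] → ℂ)

private lemma cont_integrand (w : ℚ_[p]) (hΨcont : Continuous Ψ) (v : ℕ) :
    Continuous (fun y : ℚ_[p] => Ψ (w * y) * ((‖y‖ ^ (v - 1) : ℝ) : ℂ)) :=
  (hΨcont.comp (continuous_const.mul continuous_id)).mul
    (Complex.continuous_ofReal.comp (continuous_norm.pow _))

private lemma cont_osc (w : ℚ_[p]) (hΨcont : Continuous Ψ) :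
    Continuous (fun y : ℚ_[p] => Ψ (w * y)) :=
  hΨcont.comp (continuous_const.mul continuous_id)

/-- Trivial regime: `‖w‖ ≤ 1`. -/
private lemma I_triv (hμ : μ {x : ℚ_[p] | ‖x‖ ≤ 1} = 1)
    (hΨtriv : ∀ x : ℚ_[p], ‖x‖ ≤ 1 → Ψ x = 1)
    (v : ℕ) (hv : 0 < v) (w : ℚ_[p]) (hw : ‖w‖ ≤ 1) :
    ∫ y in {y : ℚ_[p] | ‖y‖ ≤ 1}, Ψ (w * y) * ((‖y‖ ^ (v - 1) : ℝ) : ℂ) ∂μ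
      = (1 - (p : ℂ)⁻¹) / (1 - (p : ℂ) ^ (-(v : ℤ))) := by
  rw [setIntegral_congr_fun (pB_meas 1) (g := fun y => ((‖y‖ ^ (v - 1) : ℝ) : ℂ)) ?_]
  · exact base_integral μ hμ v hv
  · intro y hy
    have h1 : ‖w * y‖ ≤ 1 := by
      rw [norm_mul]
      exact mul_le_one₀ hw (norm_nonneg _) hy
    simp only [hΨtriv _ h1, one_mul]

/-- Inner oscillatory integral at conductor level: `‖w‖ = p`. -/
private lemma inner_osc_conductor (hμ : μ {x : ℚ_[p] | ‖x‖ ≤ 1} = 1)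
    (hΨcont : Continuous Ψ)
    (hΨtriv : ∀ x : ℚ_[p], ‖x‖ ≤ 1 → Ψ x = 1)
    (w : ℚ_[p]) (hw : ‖w‖ = (p : ℝ)) :
    ∫ y in {y : ℚ_[p] | ‖y‖ ≤ (p : ℝ)⁻¹}, Ψ (w * y) ∂μ = (p : ℂ)⁻¹ := by
  rw [scale_setIntegral μ hμ _ (cont_osc Ψ w hΨcont)]
  have : ∀ y ∈ {y : ℚ_[p] | ‖y‖ ≤ 1}, Ψ (w * ((p : ℚ_[p]) * y)) = (1 : ℂ) := by
    intro y hy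
    apply hΨtriv
    rw [show w * ((p : ℚ_[p]) * y) = (w * p) * y by ring, norm_mul, norm_mul,
      Padic.norm_p, hw, mul_inv_cancel₀ (by linarith [hp1R (p := p)] : (p:ℝ) ≠ 0), one_mul]
    exact hy
  rw [setIntegral_congr_fun (pB_meas 1) this, setIntegral_const, measureReal_def, hμ]
  simp [Complex.real_smul]

/-- Inner oscillatory integral vanishes for `‖w‖ ≥ p²`. -/
private lemma inner_osc_vanish (hμ : μ {x : ℚ_[p] | ‖x‖ ≤ 1} = 1)
    (hΨadd : ∀ a b : ℚ_[p], Ψ (a + b) = Ψ a * Ψ b)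
    (hΨcont : Continuous Ψ)
    (hΨnontriv : ∃ x : ℚ_[p], ‖x‖ ≤ p ∧ Ψ x ≠ 1)
    (w : ℚ_[p]) (hw : (p : ℝ) * (p : ℝ) ≤ ‖w‖) :
    ∫ y in {y : ℚ_[p] | ‖y‖ ≤ (p : ℝ)⁻¹}, Ψ (w * y) ∂μ = 0 := by
  rw [scale_setIntegral μ hμ _ (cont_osc Ψ w hΨcont)]
  have heq : ∀ y : ℚ_[p], Ψ (w * ((p : ℚ_[p]) * y)) = Ψ (((p : ℚ_[p]) * w) * y) := by
    intro y; ring_nf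
  simp_rw [heq]
  rw [vanish μ Ψ hΨadd hΨnontriv ((p : ℚ_[p]) * w) ?_, smul_zero]
  rw [norm_mul, Padic.norm_p]
  have hppos : (0:ℝ) < p := by linarith [hp1R (p := p)]
  rw [le_inv_mul_iff₀ hppos]
  linarith

/-- One recursion step, valid for `‖w‖ ≥ p`. -/
private lemma I_step (hμ : μ {x : ℚ_[p] | ‖x‖ ≤ 1} = 1)
    (hΨadd : ∀ a b : ℚ_[p], Ψ (a + b) = Ψ a * Ψ b)
    (hΨcont : Continuous Ψ)
    (hΨnontriv : ∃ x : ℚ_[p], ‖x‖ ≤ p ∧ Ψ x ≠ 1)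
    (v : ℕ) (hv : 0 < v) (w : ℚ_[p]) (hw : (p : ℝ) ≤ ‖w‖) :
    ∫ y in {y : ℚ_[p] | ‖y‖ ≤ 1}, Ψ (w * y) * ((‖y‖ ^ (v - 1) : ℝ) : ℂ) ∂μ
      = -(∫ y in {y : ℚ_[p] | ‖y‖ ≤ (p : ℝ)⁻¹}, Ψ (w * y) ∂μ)
        + (p : ℂ) ^ (-(v : ℤ)) *
          ∫ y in {y : ℚ_[p] | ‖y‖ ≤ 1}, Ψ (((p : ℚ_[p]) * w) * y) * ((‖y‖ ^ (v - 1) : ℝ) : ℂ) ∂μ := by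
  rw [split_setIntegral μ _ (cont_integrand Ψ w hΨcont v)]
  -- outer part
  have houter : ∫ y in {y : ℚ_[p] | ‖y‖ ≤ 1} \ {y : ℚ_[p] | ‖y‖ ≤ (p : ℝ)⁻¹},
        Ψ (w * y) * ((‖y‖ ^ (v - 1) : ℝ) : ℂ) ∂μ
      = -(∫ y in {y : ℚ_[p] | ‖y‖ ≤ (p : ℝ)⁻¹}, Ψ (w * y) ∂μ) := by
    rw [setIntegral_congr_fun ((pB_meas 1).diff (pB_meas _))
      (g := fun y => Ψ (w * y)) ?_]
    · have hsplit := split_setIntegral μ _ (cont_osc Ψ w hΨcont)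
      have hvan := vanish μ Ψ hΨadd hΨnontriv w hw
      rw [hvan] at hsplit
      linear_combination -hsplit
    · intro y hy
      have h1 := norm_one_of (p := p) hy.1 hy.2
      simp [h1]
  -- inner part
  have hinner : ∫ y in {y : ℚ_[p] | ‖y‖ ≤ (p : ℝ)⁻¹},
        Ψ (w * y) * ((‖y‖ ^ (v - 1) : ℝ) : ℂ) ∂μ
      = (p : ℂ) ^ (-(v : ℤ)) *
        ∫ y in {y : ℚ_[p] | ‖y‖ ≤ 1}, Ψ (((p : ℚ_[p]) * w) * y) * ((‖y‖ ^ (v - 1) : ℝ) : ℂ) ∂μ := by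
    rw [scale_setIntegral μ hμ _ (cont_integrand Ψ w hΨcont v)]
    have : ∀ y : ℚ_[p], Ψ (w * ((p : ℚ_[p]) * y)) * ((‖(p : ℚ_[p]) * y‖ ^ (v - 1) : ℝ) : ℂ)
        = (((p:ℝ)⁻¹ ^ (v - 1) : ℝ) : ℂ)
          * (Ψ (((p : ℚ_[p]) * w) * y) * ((‖y‖ ^ (v - 1) : ℝ) : ℂ)) := by
      intro y
      rw [norm_mul, Padic.norm_p, mul_pow,
        show w * ((p : ℚ_[p]) * y) = ((p : ℚ_[p]) * w) * y by ring]
      push_cast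
      ring
    simp_rw [this]
    rw [MeasureTheory.integral_const_mul]
    rw [show ∀ A : ℂ, (p:ℝ)⁻¹ • ((((p:ℝ)⁻¹ ^ (v - 1) : ℝ) : ℂ) * A)
        = (p : ℂ) ^ (-(v : ℤ)) * A from fun A => coef_eq v hv A]
  rw [houter, hinner]
  ring

/-- Main induction. -/
private lemma I_main (hμ : μ {x : ℚ_[p] | ‖x‖ ≤ 1} = 1)
    (hΨadd : ∀ a b : ℚ_[p], Ψ (a + b) = Ψ a * Ψ b)
    (hΨcont : Continuous Ψ)
    (hΨtriv : ∀ x : ℚ_[p], ‖x‖ ≤ 1 → Ψ x = 1)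
    (hΨnontriv : ∃ x : ℚ_[p], ‖x‖ ≤ p ∧ Ψ x ≠ 1)
    (v : ℕ) (hv : 0 < v) :
    ∀ m : ℕ, ∀ w : ℚ_[p], ‖w‖ = (p : ℝ) ^ (m + 1) →
    ∫ y in {y : ℚ_[p] | ‖y‖ ≤ 1}, Ψ (w * y) * ((‖y‖ ^ (v - 1) : ℝ) : ℂ) ∂μ
      = ((1 - (p : ℂ) ^ (v - 1)) / (1 - (p : ℂ) ^ (-(v : ℤ))))
        * ((p : ℂ) ^ (-(v : ℤ))) ^ (m + 1) := by
  have hppos : (0:ℝ) < p := by linarith [hp1R (p := p)]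
  have hp0 : (p : ℂ) ≠ 0 := by
    exact_mod_cast Nat.cast_ne_zero.2 (Fact.out : p.Prime).pos.ne'
  have hne := one_sub_q_ne (p := p) v hv
  intro m
  induction m with
  | zero =>
    intro w hw
    rw [pow_one] at hw
    rw [I_step μ Ψ hμ hΨadd hΨcont hΨnontriv v hv w hw.ge,
      inner_osc_conductor μ Ψ hμ hΨcont hΨtriv w hw]
    have hpw : ‖(p : ℚ_[p]) * w‖ ≤ 1 := by
      rw [norm_mul, Padic.norm_p, hw, inv_mul_cancel₀ hppos.ne']
    rw [I_triv μ Ψ hμ hΨtriv v hv _ hpw]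
    -- arithmetic
    obtain ⟨k, rfl⟩ : ∃ k, v = k + 1 := ⟨v - 1, by omega⟩
    have hqe : (p : ℂ) ^ (-((k + 1 : ℕ) : ℤ)) = ((p : ℂ) ^ (k + 1))⁻¹ := by
      rw [zpow_neg, zpow_natCast]
    rw [hqe] at hne ⊢
    simp only [Nat.add_sub_cancel] at *
    have hpk : ((p : ℂ) ^ (k + 1)) ≠ 0 := pow_ne_zero _ hp0
    have hP1 : (p : ℂ) ^ (k + 1) - 1 ≠ 0 := by
      intro h
      apply hne
      have h2 : (p : ℂ) ^ (k + 1) = 1 := by linear_combination h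
      rw [h2]; simp
    field_simp [hp0, hpk, hP1, hne]
    linear_combination (-((p : ℂ) * (1 - (p : ℂ) ^ k))) * mul_inv_cancel₀ hpk
  | succ m ih =>
    intro w hw
    have hw1 : (p : ℝ) ≤ ‖w‖ := by
      rw [hw]
      calc (p : ℝ) = (p:ℝ) ^ 1 := (pow_one _).symm
      _ ≤ (p:ℝ) ^ (m + 1 + 1) := pow_le_pow_right₀ (by linarith [hp1R (p := p)]) (by omega)
    have hw2 : (p : ℝ) * (p : ℝ) ≤ ‖w‖ := by
      rw [hw]
      calc (p : ℝ) * p = (p:ℝ) ^ 2 := by ring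
      _ ≤ (p:ℝ) ^ (m + 1 + 1) := pow_le_pow_right₀ (by linarith [hp1R (p := p)]) (by omega)
    have hpw : ‖(p : ℚ_[p]) * w‖ = (p : ℝ) ^ (m + 1) := by
      rw [norm_mul, Padic.norm_p, hw, pow_succ' (p:ℝ) (m+1),
        inv_mul_cancel_left₀ hppos.ne']
    rw [I_step μ Ψ hμ hΨadd hΨcont hΨnontriv v hv w hw1,
      inner_osc_vanish μ Ψ hμ hΨadd hΨcont hΨnontriv w hw2,
      ih ((p : ℚ_[p]) * w) hpw]
    ring

end Main

/-- Explicit evaluation of `∫_{ℤ_p} Ψ(z(1+y))·|y|_p^{v−1} dy` for `|z|_p ≥ p`. -/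
theorem padic_oscillatory_integral_explicit_value
    (p : ℕ) [Fact p.Prime]
    [MeasurableSpace ℚ_[p]] [BorelSpace ℚ_[p]]
    (μ : Measure ℚ_[p]) [μ.IsAddHaarMeasure]
    (hμ : μ {x : ℚ_[p] | ‖x‖ ≤ 1} = 1)
    (Ψ : ℚ_[p] → ℂ)
    (hΨadd : ∀ a b : ℚ_[p], Ψ (a + b) = Ψ a * Ψ b)
    (hΨcont : Continuous Ψ) (hΨnorm : ∀ x : ℚ_[p], ‖Ψ x‖ = 1)
    (hΨtriv : ∀ x : ℚ_[p], ‖x‖ ≤ 1 → Ψ x = 1)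
    (hΨnontriv : ∃ x : ℚ_[p], ‖x‖ ≤ p ∧ Ψ x ≠ 1)
    (v : ℕ) (hv : 0 < v) :
    ∀ z : ℚ_[p], (p : ℝ) ≤ ‖z‖ →
      ∫ y in {y : ℚ_[p] | ‖y‖ ≤ 1}, Ψ (z * (1 + y)) * ((‖y‖ ^ (v - 1) : ℝ) : ℂ) ∂μ =
        Ψ z * ((1 - (p : ℂ) ^ (v - 1)) / (1 - (p : ℂ) ^ (-(v : ℤ)))) *
          ((‖z‖ ^ (-(v : ℤ)) : ℝ) : ℂ) := by
  intro z hz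
  have hppos : (0:ℝ) < p := by linarith [hp1R (p := p)]
  have hz0 : z ≠ 0 := by
    intro h; rw [h, norm_zero] at hz; linarith
  -- find m with ‖z‖ = p ^ (m + 1)
  have hval := Padic.norm_eq_zpow_neg_valuation hz0
  have hm1 : (1 : ℤ) ≤ -z.valuation := by
    have h1 : (p:ℝ) ^ (1:ℤ) ≤ (p:ℝ) ^ (-z.valuation) := by
      rw [zpow_one, ← hval]; exact hz
    exact (zpow_le_zpow_iff_right₀ hp1R).1 h1
  set m : ℕ := (-z.valuation - 1).toNat with hmdef
  have hmz : -z.valuation = ((m : ℤ) + 1) := by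
    rw [hmdef]; omega
  have hznorm : ‖z‖ = (p : ℝ) ^ (m + 1) := by
    rw [hval, hmz, show ((m:ℤ)+1) = ((m+1:ℕ):ℤ) by push_cast; ring, zpow_natCast]
  -- transform the integrand
  have htrans : ∀ y : ℚ_[p], Ψ (z * (1 + y)) * ((‖y‖ ^ (v - 1) : ℝ) : ℂ)
      = Ψ z * (Ψ (z * y) * ((‖y‖ ^ (v - 1) : ℝ) : ℂ)) := by
    intro y
    rw [show z * (1 + y) = z + z * y by ring, hΨadd]
    ring
  simp_rw [htrans]
  rw [MeasureTheory.integral_const_mul,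
    I_main μ Ψ hμ hΨadd hΨcont hΨtriv hΨnontriv v hv m z hznorm]
  -- identify the power of ‖z‖
  have hzpow : ((‖z‖ ^ (-(v : ℤ)) : ℝ) : ℂ) = ((p : ℂ) ^ (-(v : ℤ))) ^ (m + 1) := by
    rw [hznorm]
    have hr : ((p:ℝ) ^ (m + 1)) ^ (-(v : ℤ)) = ((p:ℝ) ^ (-(v : ℤ))) ^ (m + 1) := by
      rw [← zpow_natCast (p:ℝ) (m+1), ← zpow_mul, mul_comm, zpow_mul, zpow_natCast]
    rw [hr]
    push_cast [Complex.ofReal_zpow]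
    ring
  rw [hzpow]
  ring
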